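/- Let G be a connected graph of order n and let r be a k-restraint on G that is not equivalent to the constant k-restraint r_c^k (equivalently, r(u) ∩ r(v) is not equal to r(u) for some edge, i.e. Σ_{uv∈E(G)} |r(u)∩r(v)| < k·m_G). Then for all sufficiently large x, π_{r_c^k}(G,x) < π_r(G,x). -/

import Mathlib

noncomputable def rcount {V : Type} [Fintype V] (G : SimpleGraph V) (r : V → Finset ℕ)
    (x : ℕ) : ℕ := by
  classical
  exact ((Fintype.piFinset fun _ : V => Finset.Icc 1 x).filter
    (fun c => (∀ v w, G.Adj v w → c v ≠ c w) ∧ ∀ v, c v ∉ r v)).card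

open Finset

section Aux
variable {V : Type} [Fintype V] [DecidableEq V]

/-- colourings in `[1,x]` avoiding the restraint `s`. -/
def avset (s : V → Finset ℕ) (x : ℕ) : Finset (V → ℕ) :=
  Fintype.piFinset fun v => Finset.Icc 1 x \ s v

/-- avoiding colourings that are constant on every edge in `T`. -/
def btset (s : V → Finset ℕ) (x : ℕ) (T : Finset (Sym2 V)) : Finset (V → ℕ) :=
  (avset s x).filter fun c => ∀ e ∈ T, ∀ a ∈ e, ∀ b ∈ e, c a = c b

lemma mem_avset {s : V → Finset ℕ} {x : ℕ} {c : V → ℕ} :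
    c ∈ avset s x ↔ ∀ v, c v ∈ Finset.Icc 1 x ∧ c v ∉ s v := by
  simp [avset, Fintype.mem_piFinset, Finset.mem_sdiff]

lemma avset_card {s : V → Finset ℕ} {k x : ℕ}
    (hs : ∀ v, (s v).card = k ∧ s v ⊆ Finset.Icc 1 x) :
    (avset s x).card = (x - k) ^ (Fintype.card V) := by
  rw [avset, Fintype.card_piFinset]
  have h : ∀ v : V, (Finset.Icc 1 x \ s v).card = x - k := by
    intro v
    rw [Finset.card_sdiff_of_subset (hs v).2, Nat.card_Icc, (hs v).1]
    omega
  simp [h]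

lemma rcount_eq (G : SimpleGraph V) [DecidableRel G.Adj] (s : V → Finset ℕ) (x : ℕ) :
    rcount G s x = ((avset s x).filter fun c => ∀ v w, G.Adj v w → c v ≠ c w).card := by
  rw [rcount]
  congr 1
  apply Finset.ext
  intro c
  simp only [Finset.mem_filter, Fintype.mem_piFinset, mem_avset]
  constructor
  · rintro ⟨h1, h2, h3⟩
    exact ⟨fun v => ⟨h1 v, h3 v⟩, h2⟩
  · rintro ⟨h1, h2⟩
    exact ⟨fun v => (h1 v).1, h2, fun v => (h1 v).2⟩

lemma filter_proper_eq (G : SimpleGraph V) [DecidableRel G.Adj] (s : V → Finset ℕ) (x : ℕ) :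
    ((avset s x).filter fun c => ∀ v w, G.Adj v w → c v ≠ c w) =
      avset s x \ G.edgeFinset.biUnion (fun e => btset s x {e}) := by
  apply Finset.ext
  intro c
  simp only [Finset.mem_filter, Finset.mem_sdiff, Finset.mem_biUnion]
  constructor
  · rintro ⟨hc, hp⟩
    refine ⟨hc, ?_⟩
    rintro ⟨e, he, hmem⟩
    rw [SimpleGraph.mem_edgeFinset] at he
    rw [btset, Finset.mem_filter] at hmem
    induction e with
    | _ u v =>
      exact hp u v he (hmem.2 _ (Finset.mem_singleton_self _)
        _ (Sym2.mem_mk_left u v) _ (Sym2.mem_mk_right u v))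
  · rintro ⟨hc, hu⟩
    refine ⟨hc, fun v w hvw hcvw => ?_⟩
    have he : s(v, w) ∈ G.edgeFinset := by
      rwa [SimpleGraph.mem_edgeFinset, SimpleGraph.mem_edgeSet]
    apply hu
    refine ⟨s(v, w), he, ?_⟩
    rw [btset, Finset.mem_filter]
    refine ⟨hc, fun e hee a ha b hb => ?_⟩
    rw [Finset.mem_singleton] at hee
    subst hee
    rw [Sym2.mem_iff] at ha hb
    rcases ha with rfl | rfl <;> rcases hb with rfl | rfl <;> simp [hcvw]


section Aux2
variable {V : Type} [Fintype V] [DecidableEq V]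

lemma inf'_btset (s : V → Finset ℕ) (x : ℕ) {T : Finset (Sym2 V)} (hT : T.Nonempty) :
    T.inf' hT (fun e => btset s x {e}) = btset s x T := by
  apply Finset.ext
  intro c
  rw [Finset.mem_inf']
  simp only [btset, Finset.mem_filter, Finset.mem_singleton]
  constructor
  · intro h
    obtain ⟨e0, he0⟩ := hT
    exact ⟨(h e0 he0).1, fun e he a ha b hb => (h e he).2 e rfl a ha b hb⟩
  · intro h e he
    refine ⟨h.1, fun e' he' => ?_⟩
    subst he'
    exact h.2 _ he

lemma rcount_int (G : SimpleGraph V) [DecidableRel G.Adj] (s : V → Finset ℕ) (x : ℕ) :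
    (rcount G s x : ℤ) = ((avset s x).card : ℤ) -
      ∑ t ∈ G.edgeFinset.powerset.filter (·.Nonempty),
        (-1 : ℤ) ^ (t.card + 1) * ((btset s x t).card : ℤ) := by
  have hsub : G.edgeFinset.biUnion (fun e => btset s x {e}) ⊆ avset s x := by
    intro c hc
    rw [Finset.mem_biUnion] at hc
    obtain ⟨e, _, hc⟩ := hc
    exact (Finset.mem_filter.1 hc).1
  rw [rcount_eq, filter_proper_eq, Finset.card_sdiff_of_subset hsub,
    Nat.cast_sub (Finset.card_le_card hsub)]
  congr 1
  rw [Finset.inclusion_exclusion_card_biUnion,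
    ← Finset.sum_coe_sort (G.edgeFinset.powerset.filter (·.Nonempty))
      (fun t => (-1 : ℤ) ^ (t.card + 1) * ((btset s x t).card : ℤ))]
  apply Finset.sum_congr rfl
  intro t _
  rw [inf'_btset]

end Aux2

lemma btset_single_card (s : V → Finset ℕ) {x k : ℕ} {u v : V} (huv : u ≠ v)
    (hs : ∀ w, (s w).card = k ∧ s w ⊆ Finset.Icc 1 x) :
    (btset s x {s(u, v)}).card
      = (Finset.Icc 1 x \ (s u ∪ s v)).card * (x - k) ^ (Fintype.card V - 2) := by
  classical
  set g : V → Finset ℕ := fun w =>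
    if w = u then {0} else if w = v then Finset.Icc 1 x \ (s u ∪ s v)
      else Finset.Icc 1 x \ s w with hg
  have hcard : (Fintype.piFinset g).card
      = (Finset.Icc 1 x \ (s u ∪ s v)).card * (x - k) ^ (Fintype.card V - 2) := by
    rw [Fintype.card_piFinset]
    have h1 : (g u).card = 1 := by simp [hg]
    have h2 : (g v).card = (Finset.Icc 1 x \ (s u ∪ s v)).card := by
      simp [hg, Ne.symm huv]
    have hvmem : v ∈ (Finset.univ : Finset V).erase u :=
      Finset.mem_erase.2 ⟨Ne.symm huv, Finset.mem_univ v⟩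
    rw [← Finset.mul_prod_erase Finset.univ (fun w => (g w).card) (Finset.mem_univ u),
      ← Finset.mul_prod_erase _ (fun w => (g w).card) hvmem, h1, h2, one_mul]
    congr 1
    have hrest : ∀ w ∈ ((Finset.univ : Finset V).erase u).erase v, (g w).card = x - k := by
      intro w hw
      rw [Finset.mem_erase, Finset.mem_erase] at hw
      have : g w = Finset.Icc 1 x \ s w := by simp [hg, hw.1, hw.2.1]
      rw [this, Finset.card_sdiff_of_subset (hs w).2, Nat.card_Icc, (hs w).1]
      omega
    rw [Finset.prod_congr rfl hrest, Finset.prod_const, Finset.card_erase_of_mem hvmem,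
      Finset.card_erase_of_mem (Finset.mem_univ u), Finset.card_univ, Nat.sub_sub]
  rw [← hcard]
  have memb : ∀ c, c ∈ btset s x {s(u, v)} ↔
      (∀ w, c w ∈ Finset.Icc 1 x ∧ c w ∉ s w) ∧ c u = c v := by
    intro c
    rw [btset, Finset.mem_filter, mem_avset]
    constructor
    · rintro ⟨h1, h2⟩
      exact ⟨h1, h2 _ (Finset.mem_singleton_self _) u (Sym2.mem_mk_left u v) v
        (Sym2.mem_mk_right u v)⟩
    · rintro ⟨h1, h2⟩
      refine ⟨h1, fun e he a ha b hb => ?_⟩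
      rw [Finset.mem_singleton] at he
      subst he
      rw [Sym2.mem_iff] at ha hb
      rcases ha with rfl | rfl <;> rcases hb with rfl | rfl <;> simp [h2]
  refine Finset.card_bij' (fun c _ => Function.update c u 0)
    (fun d _ => Function.update d u (d v)) ?hi ?hj ?li ?ri
  case hi =>
    intro c hc
    beta_reduce
    rw [memb] at hc
    rw [Fintype.mem_piFinset]
    intro w
    by_cases hwu : w = u
    · subst hwu
      simp [hg]
    · rw [Function.update_of_ne hwu]
      by_cases hwv : w = v
      · subst hwv
        have hgw : g w = Finset.Icc 1 x \ (s u ∪ s w) := by simp [hg, hwu]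
        rw [hgw, Finset.mem_sdiff, Finset.mem_union]
        have h1 := (hc.1 w).1
        have h2 := (hc.1 w).2
        have h3 := (hc.1 u).2
        rw [hc.2] at h3
        exact ⟨h1, by tauto⟩
      · have hgw : g w = Finset.Icc 1 x \ s w := by simp [hg, hwu, hwv]
        rw [hgw, Finset.mem_sdiff]
        exact hc.1 w
  case hj =>
    intro d hd
    beta_reduce
    rw [Fintype.mem_piFinset] at hd
    rw [memb]
    have hdv : d v ∈ Finset.Icc 1 x \ (s u ∪ s v) := by
      have h := hd v
      rw [hg] at h
      simpa [Ne.symm huv] using h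
    rw [Finset.mem_sdiff, Finset.mem_union] at hdv
    constructor
    · intro w
      by_cases hwu : w = u
      · subst hwu
        rw [Function.update_self]
        exact ⟨hdv.1, fun hmem => hdv.2 (Or.inl hmem)⟩
      · rw [Function.update_of_ne hwu]
        by_cases hwv : w = v
        · subst hwv
          exact ⟨hdv.1, fun hmem => hdv.2 (Or.inr hmem)⟩
        · have h := hd w
          rw [hg] at h
          simp only [if_neg hwu, if_neg hwv] at h
          rw [Finset.mem_sdiff] at h
          exact h
    · rw [Function.update_self, Function.update_of_ne (Ne.symm huv)]
  case li =>
    intro c hc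
    beta_reduce
    rw [memb] at hc
    funext w
    by_cases hwu : w = u
    · subst hwu
      rw [Function.update_self, Function.update_of_ne (Ne.symm huv), hc.2]
    · rw [Function.update_of_ne hwu, Function.update_of_ne hwu]
  case ri =>
    intro d hd
    beta_reduce
    rw [Fintype.mem_piFinset] at hd
    funext w
    by_cases hwu : w = u
    · subst hwu
      rw [Function.update_self]
      have h := hd w
      rw [hg] at h
      simp at h
      omega
    · rw [Function.update_of_ne hwu, Function.update_of_ne hwu]


lemma card_le_of_determined (K : Finset (V → ℕ)) (x : ℕ) (j1 j2 j3 : V)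
    (h12 : j1 ≠ j2) (h13 : j1 ≠ j3) (h23 : j2 ≠ j3)
    (hIcc : ∀ c ∈ K, ∀ w, c w ∈ Finset.Icc 1 x)
    (hdet : ∀ c1 ∈ K, ∀ c2 ∈ K,
      (∀ w, w ≠ j1 → w ≠ j2 → w ≠ j3 → c1 w = c2 w) → c1 = c2) :
    K.card ≤ x ^ (Fintype.card V - 3) := by
  classical
  set g : V → Finset ℕ := fun w =>
    if w = j1 ∨ w = j2 ∨ w = j3 then ({0} : Finset ℕ) else Finset.Icc 1 x with hg
  have htarget : (Fintype.piFinset g).card = x ^ (Fintype.card V - 3) := by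
    rw [Fintype.card_piFinset]
    have hm2 : j2 ∈ (Finset.univ : Finset V).erase j1 :=
      Finset.mem_erase.2 ⟨Ne.symm h12, Finset.mem_univ _⟩
    have hm3 : j3 ∈ ((Finset.univ : Finset V).erase j1).erase j2 :=
      Finset.mem_erase.2 ⟨Ne.symm h23, Finset.mem_erase.2 ⟨Ne.symm h13, Finset.mem_univ _⟩⟩
    rw [← Finset.mul_prod_erase Finset.univ (fun w => (g w).card) (Finset.mem_univ j1),
      ← Finset.mul_prod_erase _ (fun w => (g w).card) hm2,
      ← Finset.mul_prod_erase _ (fun w => (g w).card) hm3]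
    have h1 : (g j1).card = 1 := by simp [hg]
    have h2 : (g j2).card = 1 := by simp [hg]
    have h3 : (g j3).card = 1 := by simp [hg]
    rw [h1, h2, h3, one_mul, one_mul, one_mul]
    have hrest : ∀ w ∈ (((Finset.univ : Finset V).erase j1).erase j2).erase j3,
        (g w).card = x := by
      intro w hw
      simp only [Finset.mem_erase] at hw
      have : g w = Finset.Icc 1 x := by
        simp [hg, hw.1, hw.2.1, hw.2.2.1]
      rw [this, Nat.card_Icc]
      omega
    rw [Finset.prod_congr rfl hrest, Finset.prod_const,
      Finset.card_erase_of_mem hm3, Finset.card_erase_of_mem hm2,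
      Finset.card_erase_of_mem (Finset.mem_univ j1), Finset.card_univ,
      Nat.sub_sub, Nat.sub_sub]
  rw [← htarget]
  apply Finset.card_le_card_of_injOn
    (fun c w => if w = j1 ∨ w = j2 ∨ w = j3 then 0 else c w)
  · intro c hc
    rw [Finset.mem_coe, Fintype.mem_piFinset]
    intro w
    by_cases hw : w = j1 ∨ w = j2 ∨ w = j3
    · simp [hg, hw]
    · simp only [if_neg hw, hg]
      exact hIcc c hc w
  · intro c1 hc1 c2 hc2 heq
    simp only [Finset.mem_coe] at hc1 hc2
    apply hdet c1 hc1 c2 hc2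
    intro w hw1 hw2 hw3
    have := congrFun heq w
    simpa [hw1, hw2, hw3] using this



lemma key_bound_aux (x a : ℕ) (v p q p' q' : V) (hpq : p ≠ q) (hp'q' : p' ≠ q')
    (hqf : q ∉ s(p', q')) (K : Finset (V → ℕ))
    (hK : ∀ c ∈ K, (∀ w, c w ∈ Finset.Icc 1 x) ∧
      (∀ y ∈ s(p, q), ∀ z ∈ s(p, q), c y = c z) ∧
      (∀ y ∈ s(p', q'), ∀ z ∈ s(p', q'), c y = c z) ∧ c v = a) :
    K.card ≤ x ^ (Fintype.card V - 3) := by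
  have hqp' : q ≠ p' := fun h => hqf (by rw [h]; exact Sym2.mem_mk_left _ _)
  have hqq' : q ≠ q' := fun h => hqf (by rw [h]; exact Sym2.mem_mk_right _ _)
  have hmp : p ∈ s(p, q) := Sym2.mem_mk_left _ _
  have hmq : q ∈ s(p, q) := Sym2.mem_mk_right _ _
  have hmp' : p' ∈ s(p', q') := Sym2.mem_mk_left _ _
  have hmq' : q' ∈ s(p', q') := Sym2.mem_mk_right _ _
  by_cases hqv : q = v
  · by_cases hpf : p ∈ s(p', q')
    · -- q = v, p ∈ f : junk {v, p, d}
      set d : V := if p = p' then q' else p' with hd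
      have hdf : d ∈ s(p', q') := by
        rw [hd]; split <;> [exact hmq'; exact hmp']
      have hdp : d ≠ p := by
        rw [hd]
        rw [Sym2.mem_iff] at hpf
        rcases hpf with rfl | rfl
        · simp [hp'q'.symm]
        · split
          · rename_i h; exact absurd h (Ne.symm hp'q')
          · exact hp'q'
      have hdv : d ≠ v := by
        rw [hd]; split
        · exact fun h => hqq' (hqv.trans h.symm)
        · exact fun h => hqp' (hqv.trans h.symm)
      have hvp : v ≠ p := fun h => hpq (h.symm.trans hqv.symm)
      apply card_le_of_determined K x v p d hvp (Ne.symm hdv) (Ne.symm hdp)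
      · exact fun c hc => (hK c hc).1
      · intro c1 hc1 c2 hc2 hout
        obtain ⟨-, he1, hf1, ha1⟩ := hK c1 hc1
        obtain ⟨-, he2, hf2, ha2⟩ := hK c2 hc2
        have hv12 : c1 v = c2 v := by rw [ha1, ha2]
        have hq12 : c1 q = c2 q := by rw [hqv]; exact hv12
        have hp12 : c1 p = c2 p := by
          rw [he1 p hmp q hmq, he2 p hmp q hmq]; exact hq12
        have hd12 : c1 d = c2 d := by
          rw [hf1 d hdf p hpf, hf2 d hdf p hpf]; exact hp12
        funext w
        by_cases hw1 : w = v
        · subst hw1; exact hv12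
        by_cases hw2 : w = p
        · subst hw2; exact hp12
        by_cases hw3 : w = d
        · subst hw3; exact hd12
        exact hout w hw1 hw2 hw3
    · -- q = v, p ∉ f : junk {v, p, p'}
      have hpp' : p ≠ p' := fun h => hpf (by rw [h]; exact hmp')
      have hpq'2 : p ≠ q' := fun h => hpf (by rw [h]; exact hmq')
      have hvp : v ≠ p := fun h => hpq (h.symm.trans hqv.symm)
      have hvp' : v ≠ p' := fun h => hqp' (hqv.trans h)
      apply card_le_of_determined K x v p p' hvp hvp' hpp'
      · exact fun c hc => (hK c hc).1
      · intro c1 hc1 c2 hc2 hout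
        obtain ⟨-, he1, hf1, ha1⟩ := hK c1 hc1
        obtain ⟨-, he2, hf2, ha2⟩ := hK c2 hc2
        have hv12 : c1 v = c2 v := by rw [ha1, ha2]
        have hq12 : c1 q = c2 q := by rw [hqv]; exact hv12
        have hp12 : c1 p = c2 p := by
          rw [he1 p hmp q hmq, he2 p hmp q hmq]; exact hq12
        have hp'12 : c1 p' = c2 p' := by
          rw [hf1 p' hmp' q' hmq', hf2 p' hmp' q' hmq']
          refine hout q' ?_ (Ne.symm hpq'2) (Ne.symm hp'q')
          exact fun h => hqq' (hqv.trans h.symm)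
        funext w
        by_cases hw1 : w = v
        · subst hw1; exact hv12
        by_cases hw2 : w = p
        · subst hw2; exact hp12
        by_cases hw3 : w = p'
        · subst hw3; exact hp'12
        exact hout w hw1 hw2 hw3
  · by_cases hp'v : p' = v
    · -- q ≠ v, p' = v : junk {q, q', v}
      have hq'v : q' ≠ v := fun h => hp'q' (hp'v.trans h.symm)
      apply card_le_of_determined K x q q' v hqq' hqv hq'v
      · exact fun c hc => (hK c hc).1
      · intro c1 hc1 c2 hc2 hout
        obtain ⟨-, he1, hf1, ha1⟩ := hK c1 hc1
        obtain ⟨-, he2, hf2, ha2⟩ := hK c2 hc2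
        have hv12 : c1 v = c2 v := by rw [ha1, ha2]
        have hp'12 : c1 p' = c2 p' := by rw [hp'v]; exact hv12
        have hq'12 : c1 q' = c2 q' := by
          rw [hf1 q' hmq' p' hmp', hf2 q' hmq' p' hmp']; exact hp'12
        have hq12 : c1 q = c2 q := by
          rw [he1 q hmq p hmp, he2 q hmq p hmp]
          by_cases hw1 : p = v
          · rw [hw1]; exact hv12
          by_cases hw2 : p = q'
          · rw [hw2]; exact hq'12
          exact hout p hpq hw2 hw1
        funext w
        by_cases hw1 : w = q
        · subst hw1; exact hq12
        by_cases hw2 : w = q'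
        · subst hw2; exact hq'12
        by_cases hw3 : w = v
        · subst hw3; exact hv12
        exact hout w hw1 hw2 hw3
    · -- q ≠ v, p' ≠ v : junk {q, p', v}
      apply card_le_of_determined K x q p' v hqp' hqv hp'v
      · exact fun c hc => (hK c hc).1
      · intro c1 hc1 c2 hc2 hout
        obtain ⟨-, he1, hf1, ha1⟩ := hK c1 hc1
        obtain ⟨-, he2, hf2, ha2⟩ := hK c2 hc2
        have hv12 : c1 v = c2 v := by rw [ha1, ha2]
        have hp'12 : c1 p' = c2 p' := by
          rw [hf1 p' hmp' q' hmq', hf2 p' hmp' q' hmq']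
          by_cases hw1 : q' = v
          · rw [hw1]; exact hv12
          exact hout q' (Ne.symm hqq') (Ne.symm hp'q') hw1
        have hq12 : c1 q = c2 q := by
          rw [he1 q hmq p hmp, he2 q hmq p hmp]
          by_cases hw1 : p = v
          · rw [hw1]; exact hv12
          by_cases hw2 : p = p'
          · rw [hw2]; exact hp'12
          exact hout p hpq hw2 hw1
        funext w
        by_cases hw1 : w = q
        · subst hw1; exact hq12
        by_cases hw2 : w = p'
        · subst hw2; exact hp'12
        by_cases hw3 : w = v
        · subst hw3; exact hv12
        exact hout w hw1 hw2 hw3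



lemma key_bound (x a : ℕ) (v : V) (e f : Sym2 V) (hef : e ≠ f) (he : ¬e.IsDiag)
    (hf : ¬f.IsDiag) (K : Finset (V → ℕ))
    (hK : ∀ c ∈ K, (∀ w, c w ∈ Finset.Icc 1 x) ∧
      (∀ y ∈ e, ∀ z ∈ e, c y = c z) ∧ (∀ y ∈ f, ∀ z ∈ f, c y = c z) ∧ c v = a) :
    K.card ≤ x ^ (Fintype.card V - 3) := by
  induction e using Sym2.ind with | _ p q =>
  induction f using Sym2.ind with | _ p' q' =>
  rw [Sym2.mk_isDiag_iff] at he hf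
  have hout : q ∉ s(p', q') ∨ p ∉ s(p', q') := by
    by_contra hcon
    push_neg at hcon
    obtain ⟨hq, hp⟩ := hcon
    apply hef
    rw [Sym2.mem_iff] at hq hp
    rcases hq with rfl | rfl <;> rcases hp with rfl | rfl
    · exact absurd rfl (Ne.symm he)
    · exact Sym2.eq_swap
    · rfl
    · exact absurd rfl (Ne.symm he)
  rcases hout with h | h
  · exact key_bound_aux x a v p q p' q' he hf h K hK
  · apply key_bound_aux x a v q p p' q' (Ne.symm he) hf h K
    intro c hc
    obtain ⟨h1, h2, h3, h4⟩ := hK c hc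
    refine ⟨h1, ?_, h3, h4⟩
    rw [(Sym2.eq_swap : s(q, p) = s(p, q))]
    exact h2

lemma btset_sdiff_bound (r q : V → Finset ℕ) (x : ℕ) (T : Finset (Sym2 V))
    {e f : Sym2 V} (heT : e ∈ T) (hfT : f ∈ T) (hef : e ≠ f) (he : ¬e.IsDiag)
    (hf : ¬f.IsDiag) :
    (btset r x T \ btset q x T).card ≤ (∑ v : V, (q v).card) * x ^ (Fintype.card V - 3) := by
  classical
  set K0 : Finset (V → ℕ) := (Fintype.piFinset fun _ : V => Finset.Icc 1 x).filter
    (fun c => ∀ e' ∈ T, ∀ y ∈ e', ∀ z ∈ e', c y = c z) with hK0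
  have hsub : btset r x T \ btset q x T ⊆
      Finset.univ.biUnion (fun v => (q v).biUnion
        (fun a => K0.filter (fun c => c v = a))) := by
    intro c hc
    rw [Finset.mem_sdiff] at hc
    obtain ⟨hc1, hc2⟩ := hc
    rw [btset, Finset.mem_filter, mem_avset] at hc1
    have hcK0 : c ∈ K0 := by
      rw [hK0, Finset.mem_filter, Fintype.mem_piFinset]
      exact ⟨fun w => (hc1.1 w).1, hc1.2⟩
    have hex : ∃ v, c v ∈ q v := by
      by_contra hcon
      push_neg at hcon
      apply hc2
      rw [btset, Finset.mem_filter, mem_avset]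
      exact ⟨fun w => ⟨(hc1.1 w).1, hcon w⟩, hc1.2⟩
    obtain ⟨v, hv⟩ := hex
    rw [Finset.mem_biUnion]
    refine ⟨v, Finset.mem_univ v, ?_⟩
    rw [Finset.mem_biUnion]
    exact ⟨c v, hv, Finset.mem_filter.2 ⟨hcK0, rfl⟩⟩
  calc (btset r x T \ btset q x T).card
      ≤ (Finset.univ.biUnion (fun v => (q v).biUnion
          (fun a => K0.filter (fun c => c v = a)))).card := Finset.card_le_card hsub
    _ ≤ ∑ v : V, ((q v).biUnion (fun a => K0.filter (fun c => c v = a))).card :=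
        Finset.card_biUnion_le
    _ ≤ ∑ v : V, (q v).card * x ^ (Fintype.card V - 3) := by
        apply Finset.sum_le_sum
        intro v _
        calc ((q v).biUnion (fun a => K0.filter (fun c => c v = a))).card
            ≤ ∑ a ∈ q v, (K0.filter (fun c => c v = a)).card := Finset.card_biUnion_le
          _ ≤ ∑ a ∈ q v, x ^ (Fintype.card V - 3) := by
              apply Finset.sum_le_sum
              intro a _
              apply key_bound x a v e f hef he hf
              intro c hc
              rw [Finset.mem_filter, hK0, Finset.mem_filter, Fintype.mem_piFinset] at hc
              exact ⟨hc.1.1, hc.1.2 e heT, hc.1.2 f hfT, hc.2⟩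
          _ = (q v).card * x ^ (Fintype.card V - 3) := by rw [Finset.sum_const, smul_eq_mul]
    _ = (∑ v : V, (q v).card) * x ^ (Fintype.card V - 3) := by rw [Finset.sum_mul]


lemma abs_card_sub_card_le {α : Type} [DecidableEq α] (A B : Finset α) :
    |(A.card : ℤ) - (B.card : ℤ)| ≤ ((A \ B).card : ℤ) + ((B \ A).card : ℤ) := by
  have hA : A.card ≤ (A \ B).card + B.card := by
    rw [Finset.card_sdiff_add_card]
    exact Finset.card_le_card Finset.subset_union_left
  have hB : B.card ≤ (B \ A).card + A.card := by
    rw [Finset.card_sdiff_add_card]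
    exact Finset.card_le_card Finset.subset_union_left
  rw [abs_le]
  constructor <;> [omega; omega]

lemma three_le_card_of_two_edges {e f : Sym2 V} (hef : e ≠ f) (he : ¬e.IsDiag)
    (hf : ¬f.IsDiag) : 3 ≤ Fintype.card V := by
  induction e using Sym2.ind with | _ p q =>
  induction f using Sym2.ind with | _ p' q' =>
  rw [Sym2.mk_isDiag_iff] at he hf
  have hex : ∃ w ∈ s(p', q'), w ≠ p ∧ w ≠ q := by
    by_contra hcon
    push_neg at hcon
    have h1 := hcon p' (Sym2.mem_mk_left _ _)
    have h2 := hcon q' (Sym2.mem_mk_right _ _)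
    apply hef
    by_cases hpp : p' = p
    · have hq'p : q' ≠ p := fun hh => hf (hpp.trans hh.symm)
      have hq'q : q' = q := h2 hq'p
      rw [hpp, hq'q]
    · have hp'q : p' = q := h1 hpp
      have hq'q : q' ≠ q := fun hh => hf (hp'q.trans hh.symm)
      have hq'p : q' = p := by
        by_contra hq'p
        exact hq'q (h2 hq'p)
      rw [hp'q, hq'p, Sym2.eq_swap]
  obtain ⟨w, _, hwp, hwq⟩ := hex
  have h3 : ({p, q, w} : Finset V).card = 3 :=
    Finset.card_eq_three.2 ⟨p, q, w, he, Ne.symm hwp, Ne.symm hwq, rfl⟩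
  calc 3 = ({p, q, w} : Finset V).card := h3.symm
    _ ≤ (Finset.univ : Finset V).card := Finset.card_le_card (Finset.subset_univ _)
    _ = Fintype.card V := Finset.card_univ

lemma filter_card_one_eq {ι : Type} [DecidableEq ι] (s : Finset ι) :
    ((s.powerset.filter (·.Nonempty)).filter (fun t => t.card = 1)) =
      s.image (fun e => ({e} : Finset ι)) := by
  apply Finset.ext
  intro t
  simp only [Finset.mem_filter, Finset.mem_powerset, Finset.mem_image]
  constructor
  · rintro ⟨⟨hsub, -⟩, hcard⟩
    obtain ⟨a, rfl⟩ := Finset.card_eq_one.1 hcard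
    exact ⟨a, hsub (Finset.mem_singleton_self a), rfl⟩
  · rintro ⟨a, ha, rfl⟩
    exact ⟨⟨Finset.singleton_subset_iff.2 ha, Finset.singleton_nonempty a⟩,
      Finset.card_singleton a⟩

end Aux

theorem stmt7 {V : Type} [Fintype V] [DecidableEq V] (G : SimpleGraph V) [DecidableRel G.Adj]
    (hconn : G.Connected) (k : ℕ) (hk : 1 ≤ k) (r : V → Finset ℕ)
    (hr : ∀ v : V, (r v).card = k ∧ r v ⊆ Finset.Icc 1 (k * Fintype.card V))
    (hne : (∑ e ∈ G.edgeFinset,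
        Sym2.lift ⟨fun b c => ((r b) ∩ (r c)).card,
          fun b c => by simp [Finset.inter_comm]⟩ e) < k * G.edgeFinset.card) :
    ∃ N : ℕ, ∀ x ≥ N, rcount G (fun _ => Finset.Icc 1 k) x < rcount G r x := by
  classical
  set n := Fintype.card V with hn
  set m := G.edgeFinset.card with hm
  set rc : V → Finset ℕ := (fun _ : V => Finset.Icc 1 k) with hrc
  set LF : Sym2 V → ℕ := Sym2.lift ⟨fun b c => ((r b) ∩ (r c)).card,
    fun b c => by simp [Finset.inter_comm]⟩ with hLF
  have hneN : (∑ e ∈ G.edgeFinset, LF e) < k * m := hne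
  -- basic size facts
  have hm1 : 0 < m := by
    rcases Nat.eq_zero_or_pos m with h0 | h
    · exfalso
      have he : G.edgeFinset = ∅ := Finset.card_eq_zero.1 h0
      rw [he] at hneN
      simp at hneN
      omega
    · exact h
  have hn1 : 1 ≤ n := by
    obtain ⟨e, he⟩ := Finset.card_pos.1 hm1
    have : (Finset.univ : Finset V).Nonempty := by
      induction e using Sym2.ind with | _ u v =>
      exact ⟨u, Finset.mem_univ u⟩
    rw [hn, ← Finset.card_univ]
    exact Finset.card_pos.2 this
  set M := k * n with hM
  set Bc := 2 ^ m * (2 * (n * k)) * 2 ^ n with hBc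
  refine ⟨M + 2 * k + Bc + 1, fun x hx => ?_⟩
  have hxM : M ≤ x := by omega
  have hkM : k ≤ M := by
    rw [hM]
    exact Nat.le_mul_of_pos_right k (by omega)
  have hkx : k ≤ x := le_trans hkM hxM
  -- restraint facts for this x
  have hrx : ∀ v, (r v).card = k ∧ r v ⊆ Finset.Icc 1 x :=
    fun v => ⟨(hr v).1, (hr v).2.trans (Finset.Icc_subset_Icc_right hxM)⟩
  have hcx : ∀ v : V, ((rc v).card = k ∧ rc v ⊆ Finset.Icc 1 x) := by
    intro v
    constructor
    · simp [hrc]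
    · exact Finset.Icc_subset_Icc_right hkx
  set F := G.edgeFinset.powerset.filter (·.Nonempty) with hF
  set P1 := F.filter (fun t => t.card = 1) with hP1
  set P2 := F.filter (fun t => ¬ t.card = 1) with hP2
  set Xz : ℤ := ((x - k : ℕ) : ℤ) with hXz
  set g : Finset (Sym2 V) → ℤ := fun t =>
    (-1 : ℤ) ^ (t.card + 1) * (((btset rc x t).card : ℤ) - ((btset r x t).card : ℤ)) with hg
  have hXp : Xz ^ (n - 2) = (((x - k) ^ (n - 2) : ℕ) : ℤ) := by
    rw [hXz]
    push_cast
    ring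
  -- main identity
  have hD : (rcount G r x : ℤ) - (rcount G rc x : ℤ) = (∑ t ∈ P1, g t) + (∑ t ∈ P2, g t) := by
    rw [rcount_int G r x, rcount_int G rc x, avset_card hrx, avset_card hcx]
    rw [hP1, hP2, Finset.sum_filter_add_sum_filter_not F _ g]
    have hgs : ∀ t ∈ F, g t
        = (-1 : ℤ) ^ (t.card + 1) * ((btset rc x t).card : ℤ)
          - (-1 : ℤ) ^ (t.card + 1) * ((btset r x t).card : ℤ) := by
      intro t _
      rw [hg]
      ring
    rw [Finset.sum_congr rfl hgs, Finset.sum_sub_distrib]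
    ring
  -- the |t| = 1 part
  have hedge : ∀ e ∈ G.edgeFinset, ((btset rc x {e}).card : ℤ) - ((btset r x {e}).card : ℤ)
      = ((k : ℤ) - (LF e : ℤ)) * Xz ^ (n - 2) := by
    intro e he
    induction e using Sym2.ind with | _ u v =>
    have huv : u ≠ v := ((SimpleGraph.mem_edgeSet G).1 (SimpleGraph.mem_edgeFinset.1 he)).ne
    rw [btset_single_card r huv hrx, btset_single_card rc huv hcx]
    have hun : rc u ∪ rc v = Finset.Icc 1 k := by simp [hrc]
    rw [hun]
    have hsubu : r u ∪ r v ⊆ Finset.Icc 1 x := Finset.union_subset (hrx u).2 (hrx v).2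
    have hle : (r u ∪ r v).card ≤ (Finset.Icc 1 x).card := Finset.card_le_card hsubu
    rw [Nat.card_Icc] at hle
    have h1 : ((Finset.Icc 1 x \ Finset.Icc 1 k).card : ℤ) = (x : ℤ) - (k : ℤ) := by
      rw [Finset.card_sdiff_of_subset (Finset.Icc_subset_Icc_right hkx), Nat.card_Icc, Nat.card_Icc]
      omega
    have h2 : ((Finset.Icc 1 x \ (r u ∪ r v)).card : ℤ)
        = (x : ℤ) - ((r u ∪ r v).card : ℤ) := by
      rw [Finset.card_sdiff_of_subset hsubu, Nat.card_Icc]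
      omega
    have huni : (r u ∪ r v).card + (r u ∩ r v).card = k + k := by
      rw [Finset.card_union_add_card_inter, (hr u).1, (hr v).1]
    have hLFuv : (LF s(u, v) : ℤ) = ((r u ∩ r v).card : ℤ) := by
      rw [hLF, Sym2.lift_mk]
    rw [Nat.cast_mul, Nat.cast_mul, h1, h2, hXp, ← sub_mul, hLFuv]
    congr 1
    omega
  have hS1 : (∑ t ∈ P1, g t)
      = (((k * m : ℕ) : ℤ) - ((∑ e ∈ G.edgeFinset, LF e : ℕ) : ℤ)) * Xz ^ (n - 2) := by
    rw [hP1, hF, filter_card_one_eq,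
      Finset.sum_image (fun a _ b _ h => Finset.singleton_injective h)]
    have hone : ∀ e ∈ G.edgeFinset, g {e} = ((k : ℤ) - (LF e : ℤ)) * Xz ^ (n - 2) := by
      intro e he
      rw [hg]
      beta_reduce
      rw [Finset.card_singleton]
      have hpow : ((-1 : ℤ)) ^ (1 + 1) = 1 := by norm_num
      rw [hpow, one_mul]
      exact hedge e he
    rw [Finset.sum_congr rfl hone, ← Finset.sum_mul]
    congr 1
    rw [Finset.sum_sub_distrib, Finset.sum_const, Nat.cast_sum]
    push_cast
    ring
  have hXznn : (0 : ℤ) ≤ Xz ^ (n - 2) := by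
    rw [hXz]
    positivity
  have hS1ge : Xz ^ (n - 2) ≤ ∑ t ∈ P1, g t := by
    rw [hS1]
    have h1 : (1 : ℤ) ≤ ((k * m : ℕ) : ℤ) - ((∑ e ∈ G.edgeFinset, LF e : ℕ) : ℤ) := by
      omega
    nlinarith [hXznn]
  -- the |t| ≥ 2 part
  set E : ℕ := n * k * x ^ (n - 3) + n * k * x ^ (n - 3) with hE
  have hsumcard : ∀ s' : V → Finset ℕ, (∀ v, (s' v).card = k) →
      (∑ v : V, (s' v).card) = n * k := by
    intro s' h
    rw [Finset.sum_congr rfl (fun v _ => h v), Finset.sum_const, Finset.card_univ,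
      smul_eq_mul, hn]
  have hS2term : ∀ t ∈ P2, |g t| ≤ (E : ℤ) ∧ 3 ≤ n := by
    intro t ht
    rw [hP2, Finset.mem_filter] at ht
    obtain ⟨htF, hcard1⟩ := ht
    rw [hF, Finset.mem_filter, Finset.mem_powerset] at htF
    obtain ⟨hsub, hnet⟩ := htF
    have h2c : 1 < t.card := by
      have := Finset.Nonempty.card_pos hnet
      omega
    obtain ⟨e, heT, f, hfT, hef⟩ := Finset.one_lt_card.1 h2c
    have heG := hsub heT
    have hfG := hsub hfT
    have hed : ¬e.IsDiag := SimpleGraph.not_isDiag_of_mem_edgeSet G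
      (SimpleGraph.mem_edgeFinset.1 heG)
    have hfd : ¬f.IsDiag := SimpleGraph.not_isDiag_of_mem_edgeSet G
      (SimpleGraph.mem_edgeFinset.1 hfG)
    constructor
    · rw [hg]
      beta_reduce
      rw [abs_mul, abs_pow, abs_neg, abs_one, one_pow, one_mul]
      have hb1 : (btset rc x t \ btset r x t).card ≤ n * k * x ^ (n - 3) := by
        have := btset_sdiff_bound rc r x t heT hfT hef hed hfd
        rwa [hsumcard r (fun v => (hr v).1)] at this
      have hb2 : (btset r x t \ btset rc x t).card ≤ n * k * x ^ (n - 3) := by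
        have := btset_sdiff_bound r rc x t heT hfT hef hed hfd
        rwa [hsumcard rc (fun v => (hcx v).1)] at this
      calc |((btset rc x t).card : ℤ) - ((btset r x t).card : ℤ)|
          ≤ ((btset rc x t \ btset r x t).card : ℤ)
            + ((btset r x t \ btset rc x t).card : ℤ) := abs_card_sub_card_le _ _
        _ ≤ (E : ℤ) := by
            rw [hE]
            push_cast
            have := (Nat.cast_le (α := ℤ)).2 hb1
            have := (Nat.cast_le (α := ℤ)).2 hb2
            push_cast at *
            linarith
    · exact three_le_card_of_two_edges hef hed hfd
  have hS2 : |∑ t ∈ P2, g t| ≤ ((2 ^ m * E : ℕ) : ℤ) := by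
    calc |∑ t ∈ P2, g t| ≤ ∑ t ∈ P2, |g t| := Finset.abs_sum_le_sum_abs _ _
      _ ≤ ∑ _t ∈ P2, (E : ℤ) := Finset.sum_le_sum (fun t ht => (hS2term t ht).1)
      _ = (P2.card : ℤ) * (E : ℤ) := by rw [Finset.sum_const, nsmul_eq_mul]
      _ ≤ ((2 ^ m : ℕ) : ℤ) * (E : ℤ) := by
          have hc : P2.card ≤ 2 ^ m := by
            calc P2.card ≤ F.card := by rw [hP2]; exact Finset.card_filter_le F _
              _ ≤ G.edgeFinset.powerset.card := by rw [hF]; exact Finset.card_filter_le _ _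
              _ = 2 ^ m := by rw [Finset.card_powerset, hm]
          have hcz := (Nat.cast_le (α := ℤ)).2 hc
          push_cast at hcz ⊢
          exact mul_le_mul_of_nonneg_right hcz (by positivity)
      _ = ((2 ^ m * E : ℕ) : ℤ) := by push_cast; ring
  have hfin : (0 : ℤ) < (rcount G r x : ℤ) - (rcount G rc x : ℤ) := by
    rw [hD]
    rcases Finset.eq_empty_or_nonempty P2 with hP2e | hP2ne
    · rw [hP2e, Finset.sum_empty, add_zero]
      have h1 : (1 : ℤ) ≤ Xz ^ (n - 2) := by
        have h2 : 1 ≤ (x - k) ^ (n - 2) := Nat.one_le_pow _ _ (by omega)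
        rw [hXp]
        exact_mod_cast h2
      linarith
    · obtain ⟨t0, ht0⟩ := hP2ne
      have hn3 : 3 ≤ n := (hS2term t0 ht0).2
      have hx2k : x ≤ 2 * (x - k) := by omega
      have hEX : 2 ^ m * E < (x - k) ^ (n - 2) := by
        have hp1 : x ^ (n - 3) ≤ 2 ^ n * (x - k) ^ (n - 3) := by
          calc x ^ (n - 3) ≤ (2 * (x - k)) ^ (n - 3) := Nat.pow_le_pow_left hx2k _
            _ = 2 ^ (n - 3) * (x - k) ^ (n - 3) := by rw [mul_pow]
            _ ≤ 2 ^ n * (x - k) ^ (n - 3) :=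
                Nat.mul_le_mul_right _ (Nat.pow_le_pow_right (by omega) (by omega))
        have hchain : 2 ^ m * E ≤ Bc * (x - k) ^ (n - 3) := by
          rw [hE, hBc]
          calc 2 ^ m * (n * k * x ^ (n - 3) + n * k * x ^ (n - 3))
              = 2 ^ m * (2 * (n * k)) * x ^ (n - 3) := by ring
            _ ≤ 2 ^ m * (2 * (n * k)) * (2 ^ n * (x - k) ^ (n - 3)) :=
                Nat.mul_le_mul_left _ hp1
            _ = 2 ^ m * (2 * (n * k)) * 2 ^ n * (x - k) ^ (n - 3) := by ring
        have hBlt : Bc < x - k := by omega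
        have hpos : 0 < (x - k) ^ (n - 3) := pow_pos (by omega) _
        calc 2 ^ m * E ≤ Bc * (x - k) ^ (n - 3) := hchain
          _ < (x - k) * (x - k) ^ (n - 3) := mul_lt_mul_of_pos_right hBlt hpos
          _ = (x - k) ^ (n - 2) := by
              rw [← pow_succ']
              congr 1
              omega
      have hcast : ((2 ^ m * E : ℕ) : ℤ) < Xz ^ (n - 2) := by
        rw [hXp]
        exact_mod_cast hEX
      have habs := (abs_le.1 hS2).1
      linarith
  have hlt : (rcount G rc x : ℤ) < (rcount G r x : ℤ) := by linarith
  exact_mod_cast hlt
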